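/- Fix T > 0 and u_0 ∈ L²(Ω). Suppose (μ_t(·,1), μ_t(·,2))_{t∈[0,T]} and (μ̃_t(·,1), μ̃_t(·,2))_{t∈[0,T]} are two pairs of trajectories of finite signed measures on Ω̄ that both satisfy, for every g ∈ C(Ω̄): d/dt ∫ g(x) μ_t(dx,1) = ∫∫ g(x) J(x,y) X(x) dx μ_t(dy,1) − ∫∫ g(x) J(x,y) X(y) dy μ_t(dx,1) − ∫∫ g(x) R(x,y)(1−X(y)) dy μ_t(dx,1) + ∫∫ g(x) R(x,y) X(x) dx μ_t(dy,2), and d/dt ∫ g(x) μ_t(dx,2) = ∫∫ g(x)(1−X(x)) R(x,y) dx μ_t(dy,1) + ∫∫ g(x)(1−X(x)) G(x,y) dx μ_t(dy,2) − ∫∫ g(x)(1−X(y)) G(x,y) dy μ_t(dx,2) − ∫∫ g(x) X(y) R(x,y) dy μ_t(dx,2), with the same initial conditions ∫ g μ_0(dx,1) = ∫_Ω g(x) u_0(x) X(x) dx and ∫ g μ_0(dx,2) = ∫_Ω g(x) u_0(x)(1−X(x)) dx. Then μ_t(·,i) = μ̃_t(·,i) for all t ∈ [0,T] and i ∈ {1,2}.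 -/

import Mathlib

open MeasureTheory Set Filter Topology Bornology

/-- Characteristic function of a set, real-valued. -/
noncomputable def chi {α : Type*} (A : Set α) (x : α) : ℝ :=
  @ite _ (x ∈ A) (Classical.propDecidable _) 1 0

/-- The nonlocal operator `L_n` associated with the partition `(A, B)` of `Ω̄`
and the kernels `J, G, R`. -/
noncomputable def Lop {N : ℕ} (Ω A B : Set (Fin N → ℝ))
    (J G R : (Fin N → ℝ) → (Fin N → ℝ) → ℝ) (f : (Fin N → ℝ) → ℝ) (x : Fin N → ℝ) : ℝ :=
  chi A x * (∫ y in Ω, chi A y * J x y * (f y - f x))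
    + chi B x * (∫ y in Ω, chi B y * G x y * (f y - f x))
    + chi A x * (∫ y in Ω, chi B y * R x y * (f y - f x))
    + chi B x * (∫ y in Ω, chi A y * R x y * (f y - f x))

/-- Hypothesis (H) on a kernel: continuity, nonnegativity, positivity on the diagonal,
symmetry, and unit total mass. -/
def KernelH {N : ℕ} (V : (Fin N → ℝ) → (Fin N → ℝ) → ℝ) : Prop :=
  Continuous (fun p : (Fin N → ℝ) × (Fin N → ℝ) => V p.1 p.2) ∧
    (∀ x y, 0 ≤ V x y) ∧ (∀ x, 0 < V x x) ∧ (∀ x y, V x y = V y x) ∧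
    (∀ x, (∫ y, V x y) = 1)

/-- Integral of a real function against a (finite) signed measure, via the Jordan
decomposition. -/
noncomputable def sInt {α : Type*} [MeasurableSpace α] (f : α → ℝ)
    (μ : MeasureTheory.SignedMeasure α) : ℝ :=
  (∫ x, f x ∂μ.toJordanDecomposition.posPart) - ∫ x, f x ∂μ.toJordanDecomposition.negPart

section Aux

open scoped Classical

variable {α : Type*} [MeasurableSpace α]

lemma jordan_null {μ : SignedMeasure α} {A : Set α} (hA : MeasurableSet A)
    (h : ∀ s : Set α, MeasurableSet s → s ⊆ A → μ s = 0) :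
    μ.toJordanDecomposition.posPart A = 0 ∧ μ.toJordanDecomposition.negPart A = 0 := by
  obtain ⟨i, hi₁, hi₂, hi₃, hp, hn⟩ := μ.toJordanDecomposition_spec
  constructor
  · rw [hp, SignedMeasure.toMeasureOfZeroLE_apply _ hi₂ hi₁ hA]
    simp [h (i ∩ A) (hi₁.inter hA) inter_subset_right]
  · rw [hn, SignedMeasure.toMeasureOfLEZero_apply _ hi₃ hi₁.compl hA]
    simp [h (iᶜ ∩ A) (hi₁.compl.inter hA) inter_subset_right]

lemma ae_eq_of_eqOn {m : Measure α} {A : Set α} (hm : m Aᶜ = 0) {f g : α → ℝ}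
    (hfg : ∀ x ∈ A, f x = g x) : f =ᵐ[m] g := by
  refine ae_iff.2 (measure_mono_null ?_ hm)
  intro x hx
  simp only [mem_setOf_eq] at hx
  by_contra hxA
  exact hx (hfg x (notMem_compl_iff.1 hxA))

lemma sInt_congr {μ : SignedMeasure α} {A : Set α}
    (hp : μ.toJordanDecomposition.posPart Aᶜ = 0) (hn : μ.toJordanDecomposition.negPart Aᶜ = 0)
    {f g : α → ℝ} (hfg : ∀ x ∈ A, f x = g x) : sInt f μ = sInt g μ := by
  unfold sInt
  rw [integral_congr_ae (ae_eq_of_eqOn hp hfg), integral_congr_ae (ae_eq_of_eqOn hn hfg)]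

lemma integrable_of_bdd {m : Measure α} [IsFiniteMeasure m] {f : α → ℝ} (hm : Measurable f)
    {c : ℝ} (hc : ∀ x, |f x| ≤ c) : Integrable f m :=
  Integrable.mono' (integrable_const c) hm.aestronglyMeasurable
    (ae_of_all _ (by simpa [Real.norm_eq_abs] using hc))

lemma sInt_add {μ : SignedMeasure α} {f g : α → ℝ}
    (hf1 : Integrable f μ.toJordanDecomposition.posPart)
    (hf2 : Integrable f μ.toJordanDecomposition.negPart)
    (hg1 : Integrable g μ.toJordanDecomposition.posPart)
    (hg2 : Integrable g μ.toJordanDecomposition.negPart) :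
    sInt (f + g) μ = sInt f μ + sInt g μ := by
  unfold sInt
  simp only [Pi.add_apply]
  rw [integral_add hf1 hg1, integral_add hf2 hg2]; ring

lemma sInt_smul {μ : SignedMeasure α} (c : ℝ) (f : α → ℝ) :
    sInt (c • f) μ = c * sInt f μ := by
  unfold sInt
  simp_rw [Pi.smul_apply, smul_eq_mul, integral_const_mul]; ring

lemma sInt_abs_le {μ : SignedMeasure α} {f : α → ℝ} {c : ℝ} (hc : 0 ≤ c)
    (hf : ∀ x, |f x| ≤ c) :
    |sInt f μ| ≤ c * ((μ.toJordanDecomposition.posPart univ).toReal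
      + (μ.toJordanDecomposition.negPart univ).toReal) := by
  unfold sInt
  have h1 : ‖∫ x, f x ∂μ.toJordanDecomposition.posPart‖
      ≤ c * (μ.toJordanDecomposition.posPart univ).toReal :=
    norm_integral_le_of_norm_le_const (ae_of_all _ (by simpa [Real.norm_eq_abs] using hf))
  have h2 : ‖∫ x, f x ∂μ.toJordanDecomposition.negPart‖
      ≤ c * (μ.toJordanDecomposition.negPart univ).toReal :=
    norm_integral_le_of_norm_le_const (ae_of_all _ (by simpa [Real.norm_eq_abs] using hf))
  rw [Real.norm_eq_abs] at h1 h2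
  calc |_ - _| ≤ |∫ x, f x ∂μ.toJordanDecomposition.posPart|
        + |∫ x, f x ∂μ.toJordanDecomposition.negPart| := abs_sub _ _
    _ ≤ _ := by rw [mul_add]; exact add_le_add h1 h2

end Aux

section Lam

variable {N : ℕ}

/-- zero extension of a continuous function on `K`. -/
noncomputable def ext0 {K : Set (Fin N → ℝ)} (f : C(K, ℝ)) (x : Fin N → ℝ) : ℝ :=
  @dite _ (x ∈ K) (Classical.propDecidable _) (fun h => f ⟨x, h⟩) (fun _ => 0)

lemma ext0_measurable {K : Set (Fin N → ℝ)} (hK : MeasurableSet K) (f : C(K, ℝ)) :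
    Measurable (ext0 f) := by
  classical
  have h := Measurable.dite (s := K) f.continuous.measurable
    (g := fun _ => (0 : ℝ)) measurable_const hK
  convert h using 2
  unfold ext0
  split_ifs <;> rfl

lemma ext0_continuousOn {K : Set (Fin N → ℝ)} (f : C(K, ℝ)) :
    ContinuousOn (ext0 f) K := by
  rw [continuousOn_iff_continuous_restrict]
  convert f.continuous using 1
  ext x
  simp only [restrict_apply, ext0]
  rw [dif_pos x.2]

lemma ext0_norm_le {K : Set (Fin N → ℝ)} [CompactSpace K] (f : C(K, ℝ)) (x : Fin N → ℝ) :
    |ext0 f x| ≤ ‖f‖ := by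
  unfold ext0
  split_ifs with h
  · simpa [Real.norm_eq_abs] using f.norm_coe_le_norm ⟨x, h⟩
  · simpa using norm_nonneg f

end Lam

section Lam2

variable {N : ℕ}

noncomputable def restr {K : Set (Fin N → ℝ)} (g : (Fin N → ℝ) → ℝ) (hg : ContinuousOn g K) :
    C(K, ℝ) :=
  ⟨fun x => g x, continuousOn_iff_continuous_restrict.1 hg⟩

lemma restr_norm_le {K : Set (Fin N → ℝ)} [CompactSpace K] {g : (Fin N → ℝ) → ℝ}
    (hg : ContinuousOn g K) {b : ℝ} (hb : 0 ≤ b) (hgb : ∀ x ∈ K, |g x| ≤ b) :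
    ‖restr g hg‖ ≤ b :=
  (ContinuousMap.norm_le _ hb).2 fun x => by
    rw [Real.norm_eq_abs]; exact hgb x x.2

noncomputable def lam (K : Set (Fin N → ℝ)) (hKm : MeasurableSet K) [CompactSpace K]
    (μ : SignedMeasure (Fin N → ℝ)) : C(K, ℝ) →L[ℝ] ℝ :=
  LinearMap.mkContinuous
    { toFun := fun f => sInt (ext0 f) μ
      map_add' := fun f g => by
        show sInt (ext0 (f + g)) μ = sInt (ext0 f) μ + sInt (ext0 g) μ
        have h : ext0 (f + g) = ext0 f + ext0 g := by
          funext x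
          simp only [ext0, Pi.add_apply]
          split_ifs with h <;> simp
        rw [h]
        exact sInt_add
          (integrable_of_bdd (ext0_measurable hKm f) (ext0_norm_le f))
          (integrable_of_bdd (ext0_measurable hKm f) (ext0_norm_le f))
          (integrable_of_bdd (ext0_measurable hKm g) (ext0_norm_le g))
          (integrable_of_bdd (ext0_measurable hKm g) (ext0_norm_le g))
      map_smul' := fun c f => by
        show sInt (ext0 (c • f)) μ = c * sInt (ext0 f) μ
        have h : ext0 (c • f) = c • ext0 f := by
          funext x
          simp only [ext0, Pi.smul_apply]
          split_ifs with h <;> simp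
        rw [h, sInt_smul] }
    ((μ.toJordanDecomposition.posPart univ).toReal
      + (μ.toJordanDecomposition.negPart univ).toReal)
    (fun f => by
      rw [Real.norm_eq_abs, mul_comm]
      exact sInt_abs_le (norm_nonneg f) (ext0_norm_le f))

lemma lam_apply {K : Set (Fin N → ℝ)} (hKm : MeasurableSet K) [CompactSpace K]
    (μ : SignedMeasure (Fin N → ℝ)) (f : C(K, ℝ)) :
    lam K hKm μ f = sInt (ext0 f) μ := rfl

lemma sInt_eq_lam {K : Set (Fin N → ℝ)} (hKm : MeasurableSet K) [CompactSpace K]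
    {μ : SignedMeasure (Fin N → ℝ)}
    (hp : μ.toJordanDecomposition.posPart Kᶜ = 0)
    (hn : μ.toJordanDecomposition.negPart Kᶜ = 0)
    {g : (Fin N → ℝ) → ℝ} (hg : ContinuousOn g K) :
    sInt g μ = lam K hKm μ (restr g hg) := by
  rw [lam_apply]
  exact sInt_congr hp hn (fun x hx => by simp [ext0, hx, restr]; rfl)

end Lam2

section Shape

variable {N : ℕ} {K : Set (Fin N → ℝ)}

lemma shapeA (hKm : MeasurableSet K) (hKc : IsCompact K)
    {V : (Fin N → ℝ) → (Fin N → ℝ) → ℝ} (hV : Continuous fun p : _ × _ => V p.1 p.2)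
    {MV : ℝ} (hMV : ∀ x ∈ K, ∀ y ∈ K, |V x y| ≤ MV)
    {w : (Fin N → ℝ) → ℝ} (hw : Measurable w) {c : ℝ} (hc : 0 ≤ c)
    (hwc : ∀ x ∈ K, |w x| ≤ c) :
    Measurable (fun y => ∫ x in K, w x * V x y) ∧
    ContinuousOn (fun y => ∫ x in K, w x * V x y) K ∧
    ∀ y ∈ K, |∫ x in K, w x * V x y| ≤ c * MV * (volume K).toReal := by
  haveI hfin : IsFiniteMeasure (volume.restrict K) :=
    ⟨by rw [Measure.restrict_apply_univ]; exact hKc.measure_lt_top⟩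
  have hVmx : ∀ y, Measurable fun x => w x * V x y := fun y =>
    hw.mul (hV.measurable.comp (measurable_id.prodMk measurable_const))
  refine ⟨?_, ?_, ?_⟩
  · have hsm : StronglyMeasurable (Function.uncurry fun x y => w x * V x y) :=
      ((hw.comp measurable_fst).mul hV.measurable).stronglyMeasurable
    exact (hsm.integral_prod_left (μ := volume.restrict K)).measurable
  · refine continuousOn_of_dominated (bound := fun _ => c * MV)
      (fun y _ => (hVmx y).aestronglyMeasurable) ?_ (integrable_const _) ?_
    · intro y hy
      filter_upwards [ae_restrict_mem hKm] with x hx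
      rw [Real.norm_eq_abs, abs_mul]
      exact mul_le_mul (hwc x hx) (hMV x hx y hy) (abs_nonneg _) hc
    · refine ae_of_all _ fun x => ?_
      exact (continuous_const.mul (hV.comp (continuous_const.prodMk continuous_id))).continuousOn
  · intro y hy
    have := norm_integral_le_of_norm_le_const (μ := volume.restrict K)
      (f := fun x => w x * V x y) (C := c * MV) ?_
    · rw [Real.norm_eq_abs] at this
      rw [measureReal_restrict_apply_univ] at this
      calc |∫ x in K, w x * V x y| ≤ c * MV * (volume K).toReal := this
        _ = c * MV * (volume K).toReal := rfl
    · filter_upwards [ae_restrict_mem hKm] with x hx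
      rw [Real.norm_eq_abs, abs_mul]
      exact mul_le_mul (hwc x hx) (hMV x hx y hy) (abs_nonneg _) hc

lemma shapeB (hKm : MeasurableSet K) (hKc : IsCompact K)
    {V : (Fin N → ℝ) → (Fin N → ℝ) → ℝ} (hV : Continuous fun p : _ × _ => V p.1 p.2)
    {MV : ℝ} (hMV : ∀ x ∈ K, ∀ y ∈ K, |V x y| ≤ MV)
    {w : (Fin N → ℝ) → ℝ} (hw : Measurable w) (hw1 : ∀ y ∈ K, |w y| ≤ 1)
    {g : (Fin N → ℝ) → ℝ} (hgm : Measurable g) (hgc : ContinuousOn g K)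
    {c : ℝ} (hc : 0 ≤ c) (hgb : ∀ x ∈ K, |g x| ≤ c) :
    Measurable (fun x => ∫ y in K, g x * V x y * w y) ∧
    ContinuousOn (fun x => ∫ y in K, g x * V x y * w y) K ∧
    ∀ x ∈ K, |∫ y in K, g x * V x y * w y| ≤ c * MV * (volume K).toReal := by
  have hV' : Continuous fun p : (Fin N → ℝ) × (Fin N → ℝ) => V p.2 p.1 :=
    hV.comp continuous_swap
  have hMV' : ∀ x ∈ K, ∀ y ∈ K, |V y x| ≤ MV := fun x hx y hy => hMV y hy x hx
  obtain ⟨hm, hcont, hb⟩ := shapeA hKm hKc hV' hMV' hw zero_le_one hw1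
  have keyx : ∀ x, ∫ y in K, g x * V x y * w y = g x * ∫ y in K, w y * V x y := by
    intro x
    rw [← integral_const_mul]
    exact integral_congr_ae (ae_of_all _ fun y => by ring)
  have keyfun : (fun x => ∫ y in K, g x * V x y * w y)
      = fun x => g x * ∫ y in K, w y * V x y := funext keyx
  rw [keyfun]
  refine ⟨hgm.mul hm, hgc.mul hcont, ?_⟩
  intro x hx
  rw [keyx x, abs_mul]
  calc |g x| * |∫ y in K, w y * V x y| ≤ c * (1 * MV * (volume K).toReal) :=
        mul_le_mul (hgb x hx) (hb x hx) (abs_nonneg _) hc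
    _ = c * MV * (volume K).toReal := by ring

end Shape

section ExtMeas

lemma signed_ext {N : ℕ} {K : Set (Fin N → ℝ)} (hKm : MeasurableSet K) [CompactSpace K]
    {m n : SignedMeasure (Fin N → ℝ)}
    (hmp : m.toJordanDecomposition.posPart Kᶜ = 0)
    (hmn : m.toJordanDecomposition.negPart Kᶜ = 0)
    (hnp : n.toJordanDecomposition.posPart Kᶜ = 0)
    (hnn : n.toJordanDecomposition.negPart Kᶜ = 0)
    (h : lam K hKm m = lam K hKm n) : m = n := by
  have hsint : ∀ (g : (Fin N → ℝ) → ℝ), ContinuousOn g K → sInt g m = sInt g n := by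
    intro g hgc
    rw [sInt_eq_lam hKm hmp hmn hgc, sInt_eq_lam hKm hnp hnn hgc, h]
  have key : m.toJordanDecomposition.posPart + n.toJordanDecomposition.negPart
      = n.toJordanDecomposition.posPart + m.toJordanDecomposition.negPart := by
    apply ext_of_forall_lintegral_eq_of_IsFiniteMeasure
    intro f
    have hgc : Continuous fun x => (f x : ℝ) := NNReal.continuous_coe.comp f.continuous
    obtain ⟨Cb, hCb⟩ := f.bounded
    have hgb : ∀ x, |(f x : ℝ)| ≤ (f 0 : ℝ) + Cb := fun x => by
      rw [abs_of_nonneg (f x).coe_nonneg]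
      have h' := hCb x 0
      rw [NNReal.dist_eq] at h'
      have h'' := le_trans (le_abs_self ((f x : ℝ) - (f 0 : ℝ))) h'
      linarith
    have hint : ∀ (p : Measure (Fin N → ℝ)) [IsFiniteMeasure p],
        Integrable (fun x => (f x : ℝ)) p := fun p _ =>
      integrable_of_bdd hgc.measurable hgb
    have h1 := hsint (fun x => (f x : ℝ)) hgc.continuousOn
    have h2 : ∫ x, (f x : ℝ) ∂(m.toJordanDecomposition.posPart + n.toJordanDecomposition.negPart)
        = ∫ x, (f x : ℝ) ∂(n.toJordanDecomposition.posPart + m.toJordanDecomposition.negPart) := by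
      rw [integral_add_measure (hint _) (hint _), integral_add_measure (hint _) (hint _)]
      unfold sInt at h1
      linarith
    rw [lintegral_coe_eq_integral f (hint _), lintegral_coe_eq_integral f (hint _), h2]
  apply VectorMeasure.ext
  intro i hi
  have e1 : m i = (m.toJordanDecomposition.posPart i).toReal
      - (m.toJordanDecomposition.negPart i).toReal := by
    conv_lhs => rw [← m.toSignedMeasure_toJordanDecomposition]
    rw [JordanDecomposition.toSignedMeasure, Measure.toSignedMeasure_sub_apply hi]
    rfl
  have e2 : n i = (n.toJordanDecomposition.posPart i).toReal
      - (n.toJordanDecomposition.negPart i).toReal := by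
    conv_lhs => rw [← n.toSignedMeasure_toJordanDecomposition]
    rw [JordanDecomposition.toSignedMeasure, Measure.toSignedMeasure_sub_apply hi]
    rfl
  have h4 : m.toJordanDecomposition.posPart i + n.toJordanDecomposition.negPart i
      = n.toJordanDecomposition.posPart i + m.toJordanDecomposition.negPart i := by
    rw [← Measure.add_apply, ← Measure.add_apply, key]
  have h5 : (m.toJordanDecomposition.posPart i).toReal + (n.toJordanDecomposition.negPart i).toReal
      = (n.toJordanDecomposition.posPart i).toReal
        + (m.toJordanDecomposition.negPart i).toReal := by
    rw [← ENNReal.toReal_add (measure_ne_top _ _) (measure_ne_top _ _),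
      ← ENNReal.toReal_add (measure_ne_top _ _) (measure_ne_top _ _), h4]
  rw [e1, e2]
  linarith

end ExtMeas

set_option maxHeartbeats 1000000 in
theorem stmt14 {N : ℕ} (Ω : Set (Fin N → ℝ))
    (hΩo : IsOpen Ω) (hΩb : IsBounded Ω) (hΩc : IsConnected Ω)
    (J G R : (Fin N → ℝ) → (Fin N → ℝ) → ℝ)
    (hJ : KernelH J) (hG : KernelH G) (hR : KernelH R)
    (X : (Fin N → ℝ) → ℝ) (hXmeas : Measurable X) (hX : ∀ x ∈ closure Ω, 0 < X x ∧ X x < 1)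
    (T : ℝ) (hT : 0 < T)
    (u0 : (Fin N → ℝ) → ℝ) (hu0 : MemLp u0 2 (volume.restrict Ω))
    (μ1 μ2 ν1 ν2 : ℝ → MeasureTheory.SignedMeasure (Fin N → ℝ))
    (hsupp : ∀ t ∈ Set.Icc (0 : ℝ) T, ∀ s : Set (Fin N → ℝ),
      MeasurableSet s → s ⊆ (closure Ω)ᶜ →
      μ1 t s = 0 ∧ μ2 t s = 0 ∧ ν1 t s = 0 ∧ ν2 t s = 0)
    (hμ : ∀ g : (Fin N → ℝ) → ℝ, Measurable g → ContinuousOn g (closure Ω) →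
      ∀ t ∈ Set.Icc (0 : ℝ) T,
        HasDerivWithinAt (fun s => sInt g (μ1 s))
          (sInt (fun y => ∫ x in closure Ω, g x * J x y * X x) (μ1 t)
            - sInt (fun x => ∫ y in closure Ω, g x * J x y * X y) (μ1 t)
            - sInt (fun x => ∫ y in closure Ω, g x * R x y * (1 - X y)) (μ1 t)
            + sInt (fun y => ∫ x in closure Ω, g x * R x y * X x) (μ2 t)) (Set.Icc 0 T) t ∧
        HasDerivWithinAt (fun s => sInt g (μ2 s))
          (sInt (fun y => ∫ x in closure Ω, g x * (1 - X x) * R x y) (μ1 t)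
            + sInt (fun y => ∫ x in closure Ω, g x * (1 - X x) * G x y) (μ2 t)
            - sInt (fun x => ∫ y in closure Ω, g x * (1 - X y) * G x y) (μ2 t)
            - sInt (fun x => ∫ y in closure Ω, g x * X y * R x y) (μ2 t)) (Set.Icc 0 T) t)
    (hν : ∀ g : (Fin N → ℝ) → ℝ, Measurable g → ContinuousOn g (closure Ω) →
      ∀ t ∈ Set.Icc (0 : ℝ) T,
        HasDerivWithinAt (fun s => sInt g (ν1 s))
          (sInt (fun y => ∫ x in closure Ω, g x * J x y * X x) (ν1 t)
            - sInt (fun x => ∫ y in closure Ω, g x * J x y * X y) (ν1 t)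
            - sInt (fun x => ∫ y in closure Ω, g x * R x y * (1 - X y)) (ν1 t)
            + sInt (fun y => ∫ x in closure Ω, g x * R x y * X x) (ν2 t)) (Set.Icc 0 T) t ∧
        HasDerivWithinAt (fun s => sInt g (ν2 s))
          (sInt (fun y => ∫ x in closure Ω, g x * (1 - X x) * R x y) (ν1 t)
            + sInt (fun y => ∫ x in closure Ω, g x * (1 - X x) * G x y) (ν2 t)
            - sInt (fun x => ∫ y in closure Ω, g x * (1 - X y) * G x y) (ν2 t)
            - sInt (fun x => ∫ y in closure Ω, g x * X y * R x y) (ν2 t)) (Set.Icc 0 T) t)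
    (hμ0 : ∀ g : (Fin N → ℝ) → ℝ, Measurable g → ContinuousOn g (closure Ω) →
      sInt g (μ1 0) = (∫ x in Ω, g x * u0 x * X x) ∧
        sInt g (μ2 0) = ∫ x in Ω, g x * u0 x * (1 - X x))
    (hν0 : ∀ g : (Fin N → ℝ) → ℝ, Measurable g → ContinuousOn g (closure Ω) →
      sInt g (ν1 0) = (∫ x in Ω, g x * u0 x * X x) ∧
        sInt g (ν2 0) = ∫ x in Ω, g x * u0 x * (1 - X x)) :
    ∀ t ∈ Set.Icc (0 : ℝ) T, μ1 t = ν1 t ∧ μ2 t = ν2 t := by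
  classical
  set K : Set (Fin N → ℝ) := closure Ω with hKdef
  have hKm : MeasurableSet K := isClosed_closure.measurableSet
  have hKc : IsCompact K := hΩb.isCompact_closure
  haveI : CompactSpace K := isCompact_iff_compactSpace.1 hKc
  haveI hfinK : IsFiniteMeasure (volume.restrict K) :=
    ⟨by rw [Measure.restrict_apply_univ]; exact hKc.measure_lt_top⟩
  -- kernel bounds
  obtain ⟨MJ', hMJ'⟩ := (hKc.prod hKc).exists_bound_of_continuousOn hJ.1.continuousOn
  obtain ⟨MG', hMG'⟩ := (hKc.prod hKc).exists_bound_of_continuousOn hG.1.continuousOn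
  obtain ⟨MR', hMR'⟩ := (hKc.prod hKc).exists_bound_of_continuousOn hR.1.continuousOn
  set MV : ℝ := max (max MJ' MG') (max MR' 0) with hMVdef
  have hMV0 : 0 ≤ MV := le_trans (le_max_right MR' 0) (le_max_right _ _)
  have hbJ : ∀ x ∈ K, ∀ y ∈ K, |J x y| ≤ MV := fun x hx y hy => by
    have h := hMJ' (x, y) (Set.mk_mem_prod hx hy)
    rw [Real.norm_eq_abs] at h
    exact le_trans h (le_trans (le_max_left _ _) (le_max_left _ _))
  have hbG : ∀ x ∈ K, ∀ y ∈ K, |G x y| ≤ MV := fun x hx y hy => by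
    have h := hMG' (x, y) (Set.mk_mem_prod hx hy)
    rw [Real.norm_eq_abs] at h
    exact le_trans h (le_trans (le_max_right _ _) (le_max_left _ _))
  have hbR : ∀ x ∈ K, ∀ y ∈ K, |R x y| ≤ MV := fun x hx y hy => by
    have h := hMR' (x, y) (Set.mk_mem_prod hx hy)
    rw [Real.norm_eq_abs] at h
    exact le_trans h (le_trans (le_max_left _ _) (le_max_right _ _))
  set vol : ℝ := (volume K).toReal with hvoldef
  have hvol0 : (0:ℝ) ≤ vol := ENNReal.toReal_nonneg
  set B : ℝ := MV * vol + 1 with hBdef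
  have hBpos : (0:ℝ) < B := by
    have := mul_nonneg hMV0 hvol0
    rw [hBdef]; linarith
  have hMVvolB : MV * vol ≤ B := by rw [hBdef]; linarith
  set C : ℝ := 4 * B with hCdef
  have hC0 : (0:ℝ) ≤ C := by rw [hCdef]; linarith
  -- weights
  have hXc : ∀ x ∈ K, |X x| ≤ 1 := fun x hx => by
    obtain ⟨h1, h2⟩ := hX x hx
    rw [abs_of_pos h1]; linarith
  have hX'm : Measurable fun x : Fin N → ℝ => 1 - X x := measurable_const.sub hXmeas
  have hX'c : ∀ x ∈ K, |1 - X x| ≤ 1 := fun x hx => by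
    obtain ⟨h1, h2⟩ := hX x hx
    rw [abs_of_pos (by linarith)]; linarith
  -- support of Jordan parts
  have hjp : ∀ s ∈ Icc (0:ℝ) T,
      (((μ1 s).toJordanDecomposition.posPart Kᶜ = 0 ∧
        (μ1 s).toJordanDecomposition.negPart Kᶜ = 0) ∧
       ((ν1 s).toJordanDecomposition.posPart Kᶜ = 0 ∧
        (ν1 s).toJordanDecomposition.negPart Kᶜ = 0)) ∧
      (((μ2 s).toJordanDecomposition.posPart Kᶜ = 0 ∧
        (μ2 s).toJordanDecomposition.negPart Kᶜ = 0) ∧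
       ((ν2 s).toJordanDecomposition.posPart Kᶜ = 0 ∧
        (ν2 s).toJordanDecomposition.negPart Kᶜ = 0)) := by
    intro s hs
    exact ⟨⟨jordan_null hKm.compl fun u hu hus => (hsupp s hs u hu hus).1,
            jordan_null hKm.compl fun u hu hus => (hsupp s hs u hu hus).2.2.1⟩,
           ⟨jordan_null hKm.compl fun u hu hus => (hsupp s hs u hu hus).2.1,
            jordan_null hKm.compl fun u hu hus => (hsupp s hs u hu hus).2.2.2⟩⟩
  set L1 : ℝ → (C(K, ℝ) →L[ℝ] ℝ) := fun s => lam K hKm (μ1 s) - lam K hKm (ν1 s) with hL1def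
  set L2 : ℝ → (C(K, ℝ) →L[ℝ] ℝ) := fun s => lam K hKm (μ2 s) - lam K hKm (ν2 s) with hL2def
  -- basic estimate
  have est1 : ∀ s ∈ Icc (0:ℝ) T, ∀ (h : (Fin N → ℝ) → ℝ) (hhc : ContinuousOn h K),
      ∀ b : ℝ, 0 ≤ b → (∀ x ∈ K, |h x| ≤ b) →
      |sInt h (μ1 s) - sInt h (ν1 s)| ≤ b * ‖L1 s‖ := by
    intro s hs h hhc b hb hhb
    obtain ⟨⟨⟨p1, n1⟩, ⟨q1, m1⟩⟩, _⟩ := hjp s hs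
    rw [sInt_eq_lam hKm p1 n1 hhc, sInt_eq_lam hKm q1 m1 hhc]
    have e : lam K hKm (μ1 s) (restr h hhc) - lam K hKm (ν1 s) (restr h hhc)
        = L1 s (restr h hhc) := by
      rw [hL1def]; simp
    rw [e, ← Real.norm_eq_abs]
    calc ‖L1 s (restr h hhc)‖ ≤ ‖L1 s‖ * ‖restr h hhc‖ := (L1 s).le_opNorm _
      _ ≤ ‖L1 s‖ * b := mul_le_mul_of_nonneg_left (restr_norm_le hhc hb hhb) (ContinuousLinearMap.opNorm_nonneg _)
      _ = b * ‖L1 s‖ := mul_comm _ _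
  have est2 : ∀ s ∈ Icc (0:ℝ) T, ∀ (h : (Fin N → ℝ) → ℝ) (hhc : ContinuousOn h K),
      ∀ b : ℝ, 0 ≤ b → (∀ x ∈ K, |h x| ≤ b) →
      |sInt h (μ2 s) - sInt h (ν2 s)| ≤ b * ‖L2 s‖ := by
    intro s hs h hhc b hb hhb
    obtain ⟨_, ⟨⟨p2, n2⟩, ⟨q2, m2⟩⟩⟩ := hjp s hs
    rw [sInt_eq_lam hKm p2 n2 hhc, sInt_eq_lam hKm q2 m2 hhc]
    have e : lam K hKm (μ2 s) (restr h hhc) - lam K hKm (ν2 s) (restr h hhc)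
        = L2 s (restr h hhc) := by
      rw [hL2def]; simp
    rw [e, ← Real.norm_eq_abs]
    calc ‖L2 s (restr h hhc)‖ ≤ ‖L2 s‖ * ‖restr h hhc‖ := (L2 s).le_opNorm _
      _ ≤ ‖L2 s‖ * b := mul_le_mul_of_nonneg_left (restr_norm_le hhc hb hhb) (ContinuousLinearMap.opNorm_nonneg _)
      _ = b * ‖L2 s‖ := mul_comm _ _
  -- continuity in time of tested signed integrals
  have contμ1 : ∀ (h : (Fin N → ℝ) → ℝ), Measurable h → ContinuousOn h K →
      ContinuousOn (fun s => sInt h (μ1 s)) (Icc 0 T) :=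
    fun h hm hc s hs => ((hμ h hm hc s hs).1).continuousWithinAt
  have contμ2 : ∀ (h : (Fin N → ℝ) → ℝ), Measurable h → ContinuousOn h K →
      ContinuousOn (fun s => sInt h (μ2 s)) (Icc 0 T) :=
    fun h hm hc s hs => ((hμ h hm hc s hs).2).continuousWithinAt
  have contν1 : ∀ (h : (Fin N → ℝ) → ℝ), Measurable h → ContinuousOn h K →
      ContinuousOn (fun s => sInt h (ν1 s)) (Icc 0 T) :=
    fun h hm hc s hs => ((hν h hm hc s hs).1).continuousWithinAt
  have contν2 : ∀ (h : (Fin N → ℝ) → ℝ), Measurable h → ContinuousOn h K →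
      ContinuousOn (fun s => sInt h (ν2 s)) (Icc 0 T) :=
    fun h hm hc s hs => ((hν h hm hc s hs).2).continuousWithinAt
  -- admissibility helpers
  have hA1 : ∀ (V : (Fin N → ℝ) → (Fin N → ℝ) → ℝ), KernelH V →
      (∀ x ∈ K, ∀ y ∈ K, |V x y| ≤ MV) →
      ∀ (w : (Fin N → ℝ) → ℝ), Measurable w → (∀ x ∈ K, |w x| ≤ 1) →
      ∀ (g : (Fin N → ℝ) → ℝ), Measurable g → ∀ c : ℝ, 0 ≤ c → (∀ x ∈ K, |g x| ≤ c) →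
      Measurable (fun y => ∫ x in K, g x * V x y * w x) ∧
      ContinuousOn (fun y => ∫ x in K, g x * V x y * w x) K ∧
      ∀ y ∈ K, |∫ x in K, g x * V x y * w x| ≤ c * B := by
    intro V hV hbV w hwm hw1 g hgm c hc hgb
    have hwm' : Measurable fun x => g x * w x := hgm.mul hwm
    have hwb' : ∀ x ∈ K, |g x * w x| ≤ c := fun x hx => by
      rw [abs_mul]
      calc |g x| * |w x| ≤ c * 1 := mul_le_mul (hgb x hx) (hw1 x hx) (abs_nonneg _) hc
        _ = c := mul_one c
    obtain ⟨hm, hcont, hb⟩ := shapeA hKm hKc hV.1 hbV hwm' hc hwb'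
    have keyx : ∀ y, ∫ x in K, g x * w x * V x y = ∫ x in K, g x * V x y * w x :=
      fun y => integral_congr_ae (ae_of_all _ fun x => by ring)
    have keyfun : (fun y => ∫ x in K, g x * w x * V x y)
        = fun y => ∫ x in K, g x * V x y * w x := funext keyx
    rw [keyfun] at hm hcont
    refine ⟨hm, hcont, fun y hy => ?_⟩
    rw [← keyx y]
    calc |∫ x in K, g x * w x * V x y| ≤ c * MV * vol := hb y hy
      _ = c * (MV * vol) := by ring
      _ ≤ c * B := mul_le_mul_of_nonneg_left hMVvolB hc
  have hA2 : ∀ (V : (Fin N → ℝ) → (Fin N → ℝ) → ℝ), KernelH V →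
      (∀ x ∈ K, ∀ y ∈ K, |V x y| ≤ MV) →
      ∀ (w : (Fin N → ℝ) → ℝ), Measurable w → (∀ x ∈ K, |w x| ≤ 1) →
      ∀ (g : (Fin N → ℝ) → ℝ), Measurable g → ∀ c : ℝ, 0 ≤ c → (∀ x ∈ K, |g x| ≤ c) →
      Measurable (fun y => ∫ x in K, g x * w x * V x y) ∧
      ContinuousOn (fun y => ∫ x in K, g x * w x * V x y) K ∧
      ∀ y ∈ K, |∫ x in K, g x * w x * V x y| ≤ c * B := by
    intro V hV hbV w hwm hw1 g hgm c hc hgb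
    have hwm' : Measurable fun x => g x * w x := hgm.mul hwm
    have hwb' : ∀ x ∈ K, |g x * w x| ≤ c := fun x hx => by
      rw [abs_mul]
      calc |g x| * |w x| ≤ c * 1 := mul_le_mul (hgb x hx) (hw1 x hx) (abs_nonneg _) hc
        _ = c := mul_one c
    obtain ⟨hm, hcont, hb⟩ := shapeA hKm hKc hV.1 hbV hwm' hc hwb'
    refine ⟨hm, hcont, fun y hy => ?_⟩
    calc |∫ x in K, g x * w x * V x y| ≤ c * MV * vol := hb y hy
      _ = c * (MV * vol) := by ring
      _ ≤ c * B := mul_le_mul_of_nonneg_left hMVvolB hc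
  have hB1 : ∀ (V : (Fin N → ℝ) → (Fin N → ℝ) → ℝ), KernelH V →
      (∀ x ∈ K, ∀ y ∈ K, |V x y| ≤ MV) →
      ∀ (w : (Fin N → ℝ) → ℝ), Measurable w → (∀ x ∈ K, |w x| ≤ 1) →
      ∀ (g : (Fin N → ℝ) → ℝ), Measurable g → ContinuousOn g K →
      ∀ c : ℝ, 0 ≤ c → (∀ x ∈ K, |g x| ≤ c) →
      Measurable (fun x => ∫ y in K, g x * V x y * w y) ∧
      ContinuousOn (fun x => ∫ y in K, g x * V x y * w y) K ∧
      ∀ x ∈ K, |∫ y in K, g x * V x y * w y| ≤ c * B := by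
    intro V hV hbV w hwm hw1 g hgm hgc c hc hgb
    obtain ⟨hm, hcont, hb⟩ := shapeB hKm hKc hV.1 hbV hwm hw1 hgm hgc hc hgb
    refine ⟨hm, hcont, fun x hx => ?_⟩
    calc |∫ y in K, g x * V x y * w y| ≤ c * MV * vol := hb x hx
      _ = c * (MV * vol) := by ring
      _ ≤ c * B := mul_le_mul_of_nonneg_left hMVvolB hc
  have hB2 : ∀ (V : (Fin N → ℝ) → (Fin N → ℝ) → ℝ), KernelH V →
      (∀ x ∈ K, ∀ y ∈ K, |V x y| ≤ MV) →
      ∀ (w : (Fin N → ℝ) → ℝ), Measurable w → (∀ x ∈ K, |w x| ≤ 1) →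
      ∀ (g : (Fin N → ℝ) → ℝ), Measurable g → ContinuousOn g K →
      ∀ c : ℝ, 0 ≤ c → (∀ x ∈ K, |g x| ≤ c) →
      Measurable (fun x => ∫ y in K, g x * w y * V x y) ∧
      ContinuousOn (fun x => ∫ y in K, g x * w y * V x y) K ∧
      ∀ x ∈ K, |∫ y in K, g x * w y * V x y| ≤ c * B := by
    intro V hV hbV w hwm hw1 g hgm hgc c hc hgb
    obtain ⟨hm, hcont, hb⟩ := hB1 V hV hbV w hwm hw1 g hgm hgc c hc hgb
    have keyx : ∀ x, ∫ y in K, g x * V x y * w y = ∫ y in K, g x * w y * V x y :=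
      fun x => integral_congr_ae (ae_of_all _ fun y => by ring)
    have keyfun : (fun x => ∫ y in K, g x * V x y * w y)
        = fun x => ∫ y in K, g x * w y * V x y := funext keyx
    rw [keyfun] at hm hcont
    refine ⟨hm, hcont, fun x hx => ?_⟩
    rw [← keyx x]
    exact hb x hx
  -- arithmetic helpers
  have habs1 : ∀ a1 a2 a3 a4 b1 b2 b3 b4 : ℝ,
      |a1 - a2 - a3 + a4 - (b1 - b2 - b3 + b4)|
        ≤ |a1 - b1| + |a2 - b2| + |a3 - b3| + |a4 - b4| := by
    intro a1 a2 a3 a4 b1 b2 b3 b4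
    have h1 : a1 - a2 - a3 + a4 - (b1 - b2 - b3 + b4)
        = (a1 - b1) - (a2 - b2) - (a3 - b3) + (a4 - b4) := by ring
    rw [h1]
    have i1 := abs_add_le ((a1 - b1) - (a2 - b2) - (a3 - b3)) (a4 - b4)
    have i2 := abs_sub ((a1 - b1) - (a2 - b2)) (a3 - b3)
    have i3 := abs_sub (a1 - b1) (a2 - b2)
    linarith
  have habs2 : ∀ a1 a2 a3 a4 b1 b2 b3 b4 : ℝ,
      |a1 + a2 - a3 - a4 - (b1 + b2 - b3 - b4)|
        ≤ |a1 - b1| + |a2 - b2| + |a3 - b3| + |a4 - b4| := by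
    intro a1 a2 a3 a4 b1 b2 b3 b4
    have h1 : a1 + a2 - a3 - a4 - (b1 + b2 - b3 - b4)
        = (a1 - b1) + (a2 - b2) - (a3 - b3) - (a4 - b4) := by ring
    rw [h1]
    have i1 := abs_sub ((a1 - b1) + (a2 - b2) - (a3 - b3)) (a4 - b4)
    have i2 := abs_sub ((a1 - b1) + (a2 - b2)) (a3 - b3)
    have i3 := abs_add_le (a1 - b1) (a2 - b2)
    linarith
  -- generic FTC on [0, t']
  have ftc : ∀ (φ dφ : ℝ → ℝ), (∀ s ∈ Icc (0:ℝ) T, HasDerivWithinAt φ (dφ s) (Icc 0 T) s) →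
      ContinuousOn dφ (Icc 0 T) → φ 0 = 0 →
      ∀ t' ∈ Icc (0:ℝ) T, φ t' = ∫ s in (0:ℝ)..t', dφ s := by
    intro φ dφ hd hc h0 t' ht'
    have hφc : ContinuousOn φ (Icc 0 T) := fun s hs => (hd s hs).continuousWithinAt
    have heq := intervalIntegral.integral_eq_sub_of_hasDeriv_right_of_le ht'.1
      (hφc.mono (Icc_subset_Icc le_rfl ht'.2))
      (fun s hs => by
        have hsT : s ∈ Icc (0:ℝ) T := ⟨hs.1.le, hs.2.le.trans ht'.2⟩
        exact ((hd s hsT).hasDerivAt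
          (Icc_mem_nhds hs.1 (lt_of_lt_of_le hs.2 ht'.2))).hasDerivWithinAt)
      ((hc.mono (by rw [uIcc_of_le ht'.1]; exact Icc_subset_Icc le_rfl ht'.2)).intervalIntegrable)
    rw [heq, h0, sub_zero]
  -- integral identity for differences
  have key : ∀ (g : (Fin N → ℝ) → ℝ), Measurable g → ContinuousOn g K →
      ∀ c : ℝ, 0 ≤ c → (∀ x ∈ K, |g x| ≤ c) →
      ∃ d1 d2 : ℝ → ℝ,
        (∀ s ∈ Icc (0:ℝ) T, |d1 s| ≤ c * B * (3 * ‖L1 s‖ + ‖L2 s‖)) ∧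
        (∀ s ∈ Icc (0:ℝ) T, |d2 s| ≤ c * B * (‖L1 s‖ + 3 * ‖L2 s‖)) ∧
        (∀ t' ∈ Icc (0:ℝ) T,
          (sInt g (μ1 t') - sInt g (ν1 t') = ∫ s in (0:ℝ)..t', d1 s) ∧
          (sInt g (μ2 t') - sInt g (ν2 t') = ∫ s in (0:ℝ)..t', d2 s)) := by
    intro g hgm hgc c hc hgb
    have cB0 : (0:ℝ) ≤ c * B := mul_nonneg hc hBpos.le
    obtain ⟨h1m, h1c, h1b⟩ := hA1 J hJ hbJ X hXmeas hXc g hgm c hc hgb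
    obtain ⟨h2m, h2c, h2b⟩ := hB1 J hJ hbJ X hXmeas hXc g hgm hgc c hc hgb
    obtain ⟨h3m, h3c, h3b⟩ := hB1 R hR hbR (fun y => 1 - X y) hX'm hX'c g hgm hgc c hc hgb
    obtain ⟨h4m, h4c, h4b⟩ := hA1 R hR hbR X hXmeas hXc g hgm c hc hgb
    obtain ⟨k1m, k1c, k1b⟩ := hA2 R hR hbR (fun x => 1 - X x) hX'm hX'c g hgm c hc hgb
    obtain ⟨k2m, k2c, k2b⟩ := hA2 G hG hbG (fun x => 1 - X x) hX'm hX'c g hgm c hc hgb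
    obtain ⟨k3m, k3c, k3b⟩ := hB2 G hG hbG (fun y => 1 - X y) hX'm hX'c g hgm hgc c hc hgb
    obtain ⟨k4m, k4c, k4b⟩ := hB2 R hR hbR X hXmeas hXc g hgm hgc c hc hgb
    refine ⟨fun s =>
      (sInt (fun y => ∫ x in K, g x * J x y * X x) (μ1 s)
        - sInt (fun x => ∫ y in K, g x * J x y * X y) (μ1 s)
        - sInt (fun x => ∫ y in K, g x * R x y * (1 - X y)) (μ1 s)
        + sInt (fun y => ∫ x in K, g x * R x y * X x) (μ2 s))
      - (sInt (fun y => ∫ x in K, g x * J x y * X x) (ν1 s)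
        - sInt (fun x => ∫ y in K, g x * J x y * X y) (ν1 s)
        - sInt (fun x => ∫ y in K, g x * R x y * (1 - X y)) (ν1 s)
        + sInt (fun y => ∫ x in K, g x * R x y * X x) (ν2 s)), fun s =>
      (sInt (fun y => ∫ x in K, g x * (1 - X x) * R x y) (μ1 s)
        + sInt (fun y => ∫ x in K, g x * (1 - X x) * G x y) (μ2 s)
        - sInt (fun x => ∫ y in K, g x * (1 - X y) * G x y) (μ2 s)
        - sInt (fun x => ∫ y in K, g x * X y * R x y) (μ2 s))
      - (sInt (fun y => ∫ x in K, g x * (1 - X x) * R x y) (ν1 s)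
        + sInt (fun y => ∫ x in K, g x * (1 - X x) * G x y) (ν2 s)
        - sInt (fun x => ∫ y in K, g x * (1 - X y) * G x y) (ν2 s)
        - sInt (fun x => ∫ y in K, g x * X y * R x y) (ν2 s)), ?_, ?_, ?_⟩
    · intro s hs
      refine le_trans (habs1 _ _ _ _ _ _ _ _) ?_
      have e1 := est1 s hs _ h1c (c*B) cB0 h1b
      have e2 := est1 s hs _ h2c (c*B) cB0 h2b
      have e3 := est1 s hs _ h3c (c*B) cB0 h3b
      have e4 := est2 s hs _ h4c (c*B) cB0 h4b
      linarith
    · intro s hs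
      refine le_trans (habs2 _ _ _ _ _ _ _ _) ?_
      have e1 := est1 s hs _ k1c (c*B) cB0 k1b
      have e2 := est2 s hs _ k2c (c*B) cB0 k2b
      have e3 := est2 s hs _ k3c (c*B) cB0 k3b
      have e4 := est2 s hs _ k4c (c*B) cB0 k4b
      linarith
    · intro t' ht'
      constructor
      · refine ftc (fun r => sInt g (μ1 r) - sInt g (ν1 r)) _
          (fun s hs => ((hμ g hgm hgc s hs).1).sub ((hν g hgm hgc s hs).1)) ?_ ?_ t' ht'
        · exact ((((contμ1 _ h1m h1c).sub (contμ1 _ h2m h2c)).sub (contμ1 _ h3m h3c)).add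
            (contμ2 _ h4m h4c)).sub
            ((((contν1 _ h1m h1c).sub (contν1 _ h2m h2c)).sub (contν1 _ h3m h3c)).add
            (contν2 _ h4m h4c))
        · show sInt g (μ1 0) - sInt g (ν1 0) = 0
          rw [(hμ0 g hgm hgc).1, (hν0 g hgm hgc).1, sub_self]
      · refine ftc (fun r => sInt g (μ2 r) - sInt g (ν2 r)) _
          (fun s hs => ((hμ g hgm hgc s hs).2).sub ((hν g hgm hgc s hs).2)) ?_ ?_ t' ht'
        · exact ((((contμ1 _ k1m k1c).add (contμ2 _ k2m k2c)).sub (contμ2 _ k3m k3c)).sub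
            (contμ2 _ k4m k4c)).sub
            ((((contν1 _ k1m k1c).add (contν2 _ k2m k2c)).sub (contν2 _ k3m k3c)).sub
            (contν2 _ k4m k4c))
        · show sInt g (μ2 0) - sInt g (ν2 0) = 0
          rw [(hμ0 g hgm hgc).2, (hν0 g hgm hgc).2, sub_self]
  -- Banach–Steinhaus uniform bound
  have ptw : ∀ (Lf : ℝ → (C(K, ℝ) →L[ℝ] ℝ)),
      (∀ f : C(K,ℝ), ContinuousOn (fun s => Lf s f) (Icc 0 T)) →
      ∃ M0 : ℝ, ∀ s : Icc (0:ℝ) T, ‖Lf s.1‖ ≤ M0 := by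
    intro Lf hcont
    apply banach_steinhaus (g := fun s : Icc (0:ℝ) T => Lf s.1)
    intro f
    obtain ⟨Cb, hCb⟩ := isCompact_Icc.exists_bound_of_continuousOn (hcont f)
    exact ⟨Cb, fun s => hCb s.1 s.2⟩
  have hLf1 : ∀ f : C(K,ℝ), ContinuousOn (fun s => L1 s f) (Icc 0 T) := by
    intro f
    have e : (fun s => L1 s f) = fun s => sInt (ext0 f) (μ1 s) - sInt (ext0 f) (ν1 s) := by
      funext s
      rw [hL1def]
      simp [lam_apply]
    rw [e]
    exact (contμ1 _ (ext0_measurable hKm f) (ext0_continuousOn f)).sub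
      (contν1 _ (ext0_measurable hKm f) (ext0_continuousOn f))
  have hLf2 : ∀ f : C(K,ℝ), ContinuousOn (fun s => L2 s f) (Icc 0 T) := by
    intro f
    have e : (fun s => L2 s f) = fun s => sInt (ext0 f) (μ2 s) - sInt (ext0 f) (ν2 s) := by
      funext s
      rw [hL2def]
      simp [lam_apply]
    rw [e]
    exact (contμ2 _ (ext0_measurable hKm f) (ext0_continuousOn f)).sub
      (contν2 _ (ext0_measurable hKm f) (ext0_continuousOn f))
  obtain ⟨M1, hM1⟩ := ptw L1 hLf1
  obtain ⟨M2, hM2⟩ := ptw L2 hLf2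
  set M : ℝ := max M1 M2 with hMdef
  have hM1' : ∀ s ∈ Icc (0:ℝ) T, ‖L1 s‖ ≤ M := fun s hs =>
    le_trans (hM1 ⟨s, hs⟩) (le_max_left _ _)
  have hM2' : ∀ s ∈ Icc (0:ℝ) T, ‖L2 s‖ ≤ M := fun s hs =>
    le_trans (hM2 ⟨s, hs⟩) (le_max_right _ _)
  have hM0 : (0:ℝ) ≤ M := le_trans (ContinuousLinearMap.opNorm_nonneg _) (hM1' 0 ⟨le_rfl, hT.le⟩)
  have fact_ne : ∀ n : ℕ, ((n.factorial : ℝ)) ≠ 0 := fun n => Nat.cast_ne_zero.2 n.factorial_ne_zero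
  -- iteration
  have claim : ∀ n : ℕ, ∀ t' ∈ Icc (0:ℝ) T,
      ‖L1 t'‖ ≤ M * (C * t')^n / (n.factorial : ℝ) ∧
      ‖L2 t'‖ ≤ M * (C * t')^n / (n.factorial : ℝ) := by
    intro n
    induction n with
    | zero =>
      intro t' ht'
      exact ⟨by simpa using hM1' t' ht', by simpa using hM2' t' ht'⟩
    | succ n ih =>
      intro t' ht'
      have RHSnn : 0 ≤ M * (C * t')^(n+1) / (((n+1).factorial : ℕ) : ℝ) :=
        div_nonneg (mul_nonneg hM0 (pow_nonneg (mul_nonneg hC0 ht'.1) _)) (Nat.cast_nonneg _)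
      have hgenbound : ∀ (f : C(K,ℝ)) (d : ℝ → ℝ) (a3 a1 : ℝ),
          (0:ℝ) ≤ a3 → a3 ≤ 3 → (∀ s ∈ Icc (0:ℝ) T, |d s| ≤ ‖f‖ * B * (a3 * ‖L1 s‖ + a1 * ‖L2 s‖)) →
          a3 + a1 = 4 →
          ∀ᵐ s ∂volume.restrict (Set.uIoc (0:ℝ) t'),
            ‖d s‖ ≤ (‖f‖ * M * C^(n+1) / (n.factorial : ℝ)) * s^n := by
        intro f d a3 a1 ha30 ha33 hd hsum
        filter_upwards [ae_restrict_mem measurableSet_uIoc] with s hs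
        rw [Set.uIoc_of_le ht'.1] at hs
        have hsIcc : s ∈ Icc (0:ℝ) T := ⟨hs.1.le, hs.2.trans ht'.2⟩
        have i1 := (ih s hsIcc).1
        have i2 := (ih s hsIcc).2
        have hfB : (0:ℝ) ≤ ‖f‖ * B := mul_nonneg (norm_nonneg _) hBpos.le
        have ha10 : (0:ℝ) ≤ a1 := by linarith
        have hP : (0:ℝ) ≤ M * (C*s)^n / (n.factorial : ℝ) :=
          div_nonneg (mul_nonneg hM0 (pow_nonneg (mul_nonneg hC0 hs.1.le) _)) (Nat.cast_nonneg _)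
        rw [Real.norm_eq_abs]
        calc |d s| ≤ ‖f‖ * B * (a3 * ‖L1 s‖ + a1 * ‖L2 s‖) := hd s hsIcc
          _ ≤ ‖f‖ * B * (a3 * (M * (C*s)^n / (n.factorial : ℝ))
              + a1 * (M * (C*s)^n / (n.factorial : ℝ))) := by
            refine mul_le_mul_of_nonneg_left ?_ hfB
            have t1 := mul_le_mul_of_nonneg_left i1 ha30
            have t2 := mul_le_mul_of_nonneg_left i2 ha10
            linarith
          _ = (‖f‖ * M * C^(n+1) / (n.factorial : ℝ)) * s^n := by
            have e1 : a3 * (M * (C*s)^n / (n.factorial : ℝ))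
                + a1 * (M * (C*s)^n / (n.factorial : ℝ))
                = 4 * (M * (C*s)^n / (n.factorial : ℝ)) := by
              rw [← add_mul, hsum]
            rw [e1, mul_pow, pow_succ, hCdef]
            ring
      have hval : ∀ f : C(K,ℝ), ∫ s in (0:ℝ)..t', (‖f‖ * M * C^(n+1) / (n.factorial : ℝ)) * s^n
          = ‖f‖ * (M * (C*t')^(n+1) / ((n+1).factorial : ℝ)) := by
        intro f
        rw [intervalIntegral.integral_const_mul, integral_pow, zero_pow (Nat.succ_ne_zero n)]
        have hn1 : ((n:ℝ) + 1) ≠ 0 := by positivity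
        have hfs : (((n+1).factorial : ℕ) : ℝ) = ((n:ℝ)+1) * (n.factorial : ℝ) := by
          rw [Nat.factorial_succ]; push_cast; ring
        rw [hfs, mul_pow C t' (n+1)]
        field_simp
        ring
      have hbi : ∀ f : C(K,ℝ), IntervalIntegrable
          (fun s => (‖f‖ * M * C^(n+1) / (n.factorial : ℝ)) * s^n) volume 0 t' := fun f =>
        (continuous_const.mul (continuous_pow n)).intervalIntegrable _ _
      constructor
      · refine ContinuousLinearMap.opNorm_le_bound _ RHSnn fun f => ?_
        obtain ⟨d1, d2, hb1, hb2, heq⟩ := key (ext0 f) (ext0_measurable hKm f)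
          (ext0_continuousOn f) ‖f‖ (norm_nonneg f) (fun x _ => ext0_norm_le f x)
        have e1 : L1 t' f = sInt (ext0 f) (μ1 t') - sInt (ext0 f) (ν1 t') := by
          rw [hL1def]; simp [lam_apply]
        have e0 : L1 t' f = ∫ s in (0:ℝ)..t', d1 s := by rw [e1, (heq t' ht').1]
        rw [e0]
        have hbd : ∀ s ∈ Icc (0:ℝ) T, |d1 s| ≤ ‖f‖ * B * (3 * ‖L1 s‖ + 1 * ‖L2 s‖) := by
          intro s hs
          have h' := hb1 s hs
          linarith
        have hae := hgenbound f d1 3 1 (by norm_num) (by norm_num) hbd (by norm_num)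
        have hle := intervalIntegral.norm_integral_le_abs_of_norm_le hae (hbi f)
        rw [hval f, abs_of_nonneg (mul_nonneg (norm_nonneg f) RHSnn)] at hle
        calc ‖∫ s in (0:ℝ)..t', d1 s‖
            ≤ ‖f‖ * (M * (C*t')^(n+1) / ((n+1).factorial : ℝ)) := hle
          _ = M * (C * t')^(n+1) / ((n+1).factorial : ℝ) * ‖f‖ := by ring
      · refine ContinuousLinearMap.opNorm_le_bound _ RHSnn fun f => ?_
        obtain ⟨d1, d2, hb1, hb2, heq⟩ := key (ext0 f) (ext0_measurable hKm f)
          (ext0_continuousOn f) ‖f‖ (norm_nonneg f) (fun x _ => ext0_norm_le f x)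
        have e1 : L2 t' f = sInt (ext0 f) (μ2 t') - sInt (ext0 f) (ν2 t') := by
          rw [hL2def]; simp [lam_apply]
        have e0 : L2 t' f = ∫ s in (0:ℝ)..t', d2 s := by rw [e1, (heq t' ht').2]
        rw [e0]
        have hbd : ∀ s ∈ Icc (0:ℝ) T, |d2 s| ≤ ‖f‖ * B * (1 * ‖L1 s‖ + 3 * ‖L2 s‖) := by
          intro s hs
          have h' := hb2 s hs
          linarith
        have hae := hgenbound f d2 1 3 (by norm_num) (by norm_num) hbd (by norm_num)
        have hle := intervalIntegral.norm_integral_le_abs_of_norm_le hae (hbi f)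
        rw [hval f, abs_of_nonneg (mul_nonneg (norm_nonneg f) RHSnn)] at hle
        calc ‖∫ s in (0:ℝ)..t', d2 s‖
            ≤ ‖f‖ * (M * (C*t')^(n+1) / ((n+1).factorial : ℝ)) := hle
          _ = M * (C * t')^(n+1) / ((n+1).factorial : ℝ) * ‖f‖ := by ring
  -- conclusion
  intro t ht
  have tends : Tendsto (fun n : ℕ => M * (C*t)^n / (n.factorial : ℝ)) atTop (𝓝 0) := by
    have h1 := FloorSemiring.tendsto_pow_div_factorial_atTop (K := ℝ) (C*t)
    have h2 := h1.const_mul M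
    simpa [mul_div_assoc] using h2
  have hz1 : lam K hKm (μ1 t) = lam K hKm (ν1 t) := by
    have hle : ‖L1 t‖ ≤ 0 := ge_of_tendsto' tends fun n => (claim n t ht).1
    have hz0 : ‖L1 t‖ = 0 := le_antisymm hle (ContinuousLinearMap.opNorm_nonneg _)
    have hz : L1 t = 0 := by rwa [ContinuousLinearMap.opNorm_zero_iff] at hz0
    have hz' : lam K hKm (μ1 t) - lam K hKm (ν1 t) = 0 := hz
    exact sub_eq_zero.1 hz'
  have hz2 : lam K hKm (μ2 t) = lam K hKm (ν2 t) := by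
    have hle : ‖L2 t‖ ≤ 0 := ge_of_tendsto' tends fun n => (claim n t ht).2
    have hz0 : ‖L2 t‖ = 0 := le_antisymm hle (ContinuousLinearMap.opNorm_nonneg _)
    have hz : L2 t = 0 := by rwa [ContinuousLinearMap.opNorm_zero_iff] at hz0
    have hz' : lam K hKm (μ2 t) - lam K hKm (ν2 t) = 0 := hz
    exact sub_eq_zero.1 hz'
  obtain ⟨⟨⟨p1, n1⟩, ⟨q1, m1⟩⟩, ⟨⟨p2, n2⟩, ⟨q2, m2⟩⟩⟩ := hjp t ht
  exact ⟨signed_ext hKm p1 n1 q1 m1 hz1, signed_ext hKm p2 n2 q2 m2 hz2⟩
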